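/- Let p be a prime and r ≥ 0, and let T be the discrete p-torus of rank r. Set k = 1 if p is odd and k = 2 if p = 2. If α is an automorphism of T of finite order such that α(x) = x for every x ∈ T with p^k · x = 0, then α is the identity. Equivalently, any finite group of automorphisms of T acts faithfully on Ω₁(T) when p is odd, and on Ω₂(T) when p = 2. -/

import Mathlib

/-- The image of the `p`-adic integers in `ℚ_[p]`, as an additive subgroup. -/
noncomputable def padicIntAddSubgroup (p : ℕ) [Fact p.Prime] : AddSubgroup ℚ_[p] :=
  (PadicInt.Coe.ringHom (p := p)).toAddMonoidHom.range

/-- The Prüfer `p`-group `ℤ(p^∞)`, realized as `ℚ_[p] ⧸ ℤ_[p]`. -/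
abbrev ZpInfty (p : ℕ) [Fact p.Prime] : Type :=
  ℚ_[p] ⧸ padicIntAddSubgroup p

/-- The discrete `p`-torus of rank `r`. -/
abbrev DiscretePTorus (p : ℕ) [Fact p.Prime] (r : ℕ) : Type :=
  Fin r → ZpInfty p

section Abstract

variable {A : Type*} [AddCommGroup A]

/-- `f` kills `Ω_n(A)`. -/
def OmegaKill (p n : ℕ) (f : AddMonoid.End A) : Prop :=
  ∀ x : A, p ^ n • x = 0 → f x = 0

namespace OmegaKill

variable {p : ℕ} {f g : AddMonoid.End A} {m n : ℕ}

lemma anti (h : OmegaKill p (n + 1) f) : OmegaKill p n f := fun x hx => by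
  refine h x ?_
  have : p ^ (n + 1) • x = p • p ^ n • x := by rw [← mul_smul, ← pow_succ']
  rw [this, hx, smul_zero]

lemma of_le (hmn : m ≤ n) (h : OmegaKill p n f) : OmegaKill p m f := by
  induction n with
  | zero => simpa [Nat.le_zero.mp hmn] using h
  | succ n ih =>
    rcases Nat.lt_or_ge m (n + 1) with h' | h'
    · exact ih (by omega) h.anti
    · have : m = n + 1 := by omega
      simpa [this] using h

lemma mul (hf : OmegaKill p m f) (hg : OmegaKill p n g) :
    OmegaKill p (m + n) (f * g) := fun x hx => by
  have hgx : p ^ m • g x = 0 := by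
    rw [← map_nsmul]
    refine hg _ ?_
    rw [← mul_smul, ← pow_add, add_comm n m]
    exact hx
  exact hf _ hgx

lemma mul_right (hg : OmegaKill p n g) : OmegaKill p n (f * g) := fun x hx => by
  show f (g x) = 0
  rw [hg x hx, map_zero]

lemma nsmul (c : ℕ) (hf : OmegaKill p n f) : OmegaKill p n (c • f) := fun x hx => by
  show c • f x = 0
  rw [hf x hx, smul_zero]

lemma neg (hf : OmegaKill p n f) : OmegaKill p n (-f) := fun x hx => by
  show -(f x) = 0
  rw [hf x hx, neg_zero]

lemma add (hf : OmegaKill p n f) (hg : OmegaKill p n g) :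
    OmegaKill p n (f + g) := fun x hx => by
  show f x + g x = 0
  rw [hf x hx, hg x hx, add_zero]

lemma p_smul (hf : OmegaKill p n f) : OmegaKill p (n + 1) (p • f) := fun x hx => by
  show p • f x = 0
  rw [← map_nsmul]
  refine hf _ ?_
  rw [← mul_smul, ← pow_succ]
  exact hx

lemma of_p_smul (hdiv : ∀ x : A, ∃ y, p • y = x)
    (hf : OmegaKill p (n + 1) (p • f)) : OmegaKill p n f := fun x hx => by
  obtain ⟨y, hy⟩ := hdiv x
  have hy' : p ^ (n + 1) • y = 0 := by
    rw [pow_succ, mul_smul, hy, hx]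
  have h0 : p • f y = 0 := hf y hy'
  rw [← map_nsmul, hy] at h0
  exact h0

end OmegaKill

lemma addAut_pow_apply (α : AddAut A) (m : ℕ) :
    ∀ x : A, (m • α) x = ((show AddMonoid.End A from α.toAddMonoidHom) ^ m) x := by
  induction m with
  | zero => intro x; rfl
  | succ m ih =>
    intro x
    rw [succ_nsmul, pow_succ]
    show (m • α) (α x)
      = ((show AddMonoid.End A from α.toAddMonoidHom) ^ m) (α x)
    exact ih (α x)

/-- Key step: an automorphism of prime order `q` fixing `Ω_k` pointwise is the identity. -/
lemma prime_order_eq_one {p k : ℕ} (hp : p.Prime)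
    (hdiv : ∀ x : A, ∃ y, p • y = x) (htor : ∀ x : A, ∃ n, p ^ n • x = 0)
    (hk1 : 1 ≤ k) (hk2 : p = 2 → 2 ≤ k)
    (α : AddAut A) {q : ℕ} (hq : q.Prime) (hαq : q • α = 0)
    (h : ∀ x : A, p ^ k • x = 0 → α x = x) : α = 0 := by
  classical
  by_contra hne
  set a : AddMonoid.End A := α.toAddMonoidHom with ha
  set b : AddMonoid.End A := a - 1 with hbdef
  have hbapp : ∀ x : A, b x = α x - x := fun x => rfl
  have haq : a ^ q = 1 := by
    refine AddMonoidHom.ext fun x => ?_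
    have := addAut_pow_apply α q x
    rw [hαq] at this
    exact this.symm
  have hbk : OmegaKill p k b := fun x hx => by
    rw [hbapp, h x hx, sub_self]
  have hbne : b ≠ 0 := by
    intro hb0
    apply hne
    refine AddEquiv.ext fun x => ?_
    have hx0 : b x = 0 := by rw [hb0]; rfl
    rw [hbapp] at hx0
    have := sub_eq_zero.mp hx0
    simpa using this
  have hex : ∃ n, ¬ OmegaKill p n b := by
    by_contra hc
    push_neg at hc
    apply hbne
    refine AddMonoidHom.ext fun x => ?_
    obtain ⟨n, hn⟩ := htor x
    exact hc n x hn
  set N := Nat.find hex with hN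
  have hkN : k < N := by
    rw [hN, Nat.lt_find_iff]
    intro j hj hcon
    exact hcon (hbk.of_le hj)
  set t := N - 1 with ht
  have htN : N = t + 1 := by omega
  have htk : k ≤ t := by omega
  have ht1 : 1 ≤ t := le_trans hk1 htk
  have hDt : OmegaKill p t b := by
    by_contra hcon
    exact absurd (Nat.find_min' hex hcon) (by omega)
  have hDt1 : ¬ OmegaKill p (t + 1) b := htN ▸ Nat.find_spec hex
  -- geometric series
  set s : AddMonoid.End A := ∑ i ∈ Finset.range q, a ^ i with hs
  have hsb : s * b = 0 := by
    rw [hs, hbdef, geom_sum_mul, haq, sub_self]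
  set c : AddMonoid.End A := ∑ i ∈ Finset.range q, ∑ j ∈ Finset.range i, a ^ j with hc
  have hpow : ∀ i : ℕ, a ^ i = 1 + (∑ j ∈ Finset.range i, a ^ j) * b := fun i => by
    have := geom_sum_mul a i
    rw [← hbdef] at this
    rw [this]
    abel
  have hsc : s = q • (1 : AddMonoid.End A) + c * b := by
    rw [hs, hc]
    calc ∑ i ∈ Finset.range q, a ^ i
        = ∑ i ∈ Finset.range q, (1 + (∑ j ∈ Finset.range i, a ^ j) * b) :=
          Finset.sum_congr rfl fun i _ => hpow i
      _ = q • (1 : AddMonoid.End A)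
          + (∑ i ∈ Finset.range q, ∑ j ∈ Finset.range i, a ^ j) * b := by
          rw [Finset.sum_add_distrib, Finset.sum_const, Finset.card_range, Finset.sum_mul]
  have hmain : q • b + c * b * b = 0 := by
    have h0 : (q • (1 : AddMonoid.End A) + c * b) * b = 0 := by rw [← hsc]; exact hsb
    calc q • b + c * b * b = (q • (1 : AddMonoid.End A) + c * b) * b := by
          rw [add_mul, smul_mul_assoc, one_mul]
      _ = 0 := h0
  have hqb : q • b = -(c * b * b) := eq_neg_of_add_eq_zero_left hmain
  have hbb : OmegaKill p (t + t) (b * b) := hDt.mul hDt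
  by_cases hqp : q = p
  · -- q = p case
    subst hqp
    set d : AddMonoid.End A :=
      ∑ i ∈ Finset.range q, ∑ j ∈ Finset.range i, ∑ l ∈ Finset.range j, a ^ l with hd
    set m : ℕ := ∑ i ∈ Finset.range q, i with hm
    have hinner : ∀ i : ℕ, ∑ j ∈ Finset.range i, a ^ j
        = i • (1 : AddMonoid.End A) + (∑ j ∈ Finset.range i, ∑ l ∈ Finset.range j, a ^ l) * b :=
      fun i => by
        calc ∑ j ∈ Finset.range i, a ^ j
            = ∑ j ∈ Finset.range i, (1 + (∑ l ∈ Finset.range j, a ^ l) * b) :=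
              Finset.sum_congr rfl fun j _ => hpow j
          _ = _ := by
              rw [Finset.sum_add_distrib, Finset.sum_const, Finset.card_range, Finset.sum_mul]
    have hcd : c = m • (1 : AddMonoid.End A) + d * b := by
      rw [hc, hd, hm]
      calc ∑ i ∈ Finset.range q, ∑ j ∈ Finset.range i, a ^ j
          = ∑ i ∈ Finset.range q,
              (i • (1 : AddMonoid.End A)
                + (∑ j ∈ Finset.range i, ∑ l ∈ Finset.range j, a ^ l) * b) :=
            Finset.sum_congr rfl fun i _ => hinner i
        _ = _ := by
            rw [Finset.sum_add_distrib, ← Finset.sum_smul, Finset.sum_mul]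
    have hexp : c * b * b = m • (b * b) + d * (b * (b * b)) := by
      rw [hcd, add_mul, add_mul, smul_mul_assoc, smul_mul_assoc, one_mul,
        mul_assoc, mul_assoc]
    have hdpart : OmegaKill q (t + 2) (d * (b * (b * b))) := by
      have h3 : OmegaKill q (t + (t + t)) (b * (b * b)) := hDt.mul hbb
      exact (OmegaKill.mul_right h3).of_le (by omega)
    have hmpart : OmegaKill q (t + 2) (m • (b * b)) := by
      by_cases hp2 : q = 2
      · have ht2 : 2 ≤ t := le_trans (hk2 hp2) htk
        exact (hbb.nsmul m).of_le (by omega)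
      · -- p odd : p ∣ m
        have h2m : m * 2 = q * (q - 1) := Finset.sum_range_id_mul_two q
        have hpd2 : q ∣ m * 2 := h2m ▸ Dvd.intro _ rfl
        have hco : Nat.Coprime q 2 := (Nat.coprime_primes hq Nat.prime_two).mpr hp2
        have hpm : q ∣ m := (Nat.Coprime.dvd_of_dvd_mul_right hco hpd2)
        obtain ⟨m', hm'⟩ := hpm
        have : m • (b * b) = q • (m' • (b * b)) := by
          rw [smul_smul, ← hm']
        rw [this]
        have h1 : OmegaKill q (t + 1) (m' • (b * b)) :=
          (hbb.nsmul m').of_le (by omega)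
        exact h1.p_smul
    have hfinal : OmegaKill q (t + 2) (q • b) := by
      rw [hqb]
      exact (hexp ▸ hmpart.add hdpart).neg
    have : OmegaKill q (t + 1) b := OmegaKill.of_p_smul hdiv hfinal
    exact hDt1 this
  · -- q ≠ p : coprime case
    have hcbb : OmegaKill p (t + 1) (c * b * b) := by
      have h2 : c * b * b = c * (b * b) := by rw [mul_assoc]
      rw [h2]
      exact (OmegaKill.mul_right hbb).of_le (by omega)
    have hqbD : OmegaKill p (t + 1) (q • b) := hqb ▸ hcbb.neg
    apply hDt1
    intro x hx
    have h1 : q • b x = 0 := hqbD x hx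
    have h2 : p • b x = 0 := by
      rw [← map_nsmul]
      refine hDt _ ?_
      rw [← mul_smul, ← pow_succ]
      exact hx
    have hdq : addOrderOf (b x) ∣ q := addOrderOf_dvd_of_nsmul_eq_zero h1
    have hdp : addOrderOf (b x) ∣ p := addOrderOf_dvd_of_nsmul_eq_zero h2
    have hco : Nat.Coprime q p := (Nat.coprime_primes hq hp).mpr hqp
    have : addOrderOf (b x) ∣ 1 := hco ▸ Nat.dvd_gcd hdq hdp
    exact AddMonoid.addOrderOf_eq_one_iff.mp (Nat.eq_one_of_dvd_one this)

/-- General finite-order case, by reduction to prime order. -/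
lemma finite_order_eq_one {p k : ℕ} (hp : p.Prime)
    (hdiv : ∀ x : A, ∃ y, p • y = x) (htor : ∀ x : A, ∃ n, p ^ n • x = 0)
    (hk1 : 1 ≤ k) (hk2 : p = 2 → 2 ≤ k)
    (α : AddAut A) (hα : IsOfFinAddOrder α)
    (h : ∀ x : A, p ^ k • x = 0 → α x = x) : α = 0 := by
  by_contra hne
  set n := addOrderOf α with hn
  have hn0 : 0 < n := hα.addOrderOf_pos
  have hn1 : n ≠ 1 := fun h1 => hne (AddMonoid.addOrderOf_eq_one_iff.mp h1)
  have hq : (n.minFac).Prime := Nat.minFac_prime hn1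
  set q := n.minFac with hqdef
  set α' := (n / q) • α with hα'
  have hα'q : q • α' = 0 := by
    rw [hα', smul_smul, Nat.mul_div_cancel' (Nat.minFac_dvd n), hn, addOrderOf_nsmul_eq_zero]
  have hfixpow : ∀ m : ℕ, ∀ x : A, p ^ k • x = 0 → (m • α) x = x := by
    intro m
    induction m with
    | zero => intro x _; rfl
    | succ m ih =>
      intro x hx
      rw [succ_nsmul]
      show (m • α) (α x) = x
      rw [h x hx]
      exact ih x hx
  have h' : ∀ x : A, p ^ k • x = 0 → α' x = x := fun x hx => hfixpow (n / q) x hx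
  have heq1 : α' = 0 := prime_order_eq_one hp hdiv htor hk1 hk2 α' hq hα'q h'
  have hdvd : n ∣ n / q := addOrderOf_dvd_of_nsmul_eq_zero (by rw [← hα']; exact heq1)
  have hlt : n / q < n := Nat.div_lt_self hn0 hq.one_lt
  have hpos : 0 < n / q := Nat.div_pos (Nat.minFac_le hn0) hq.pos
  exact absurd (Nat.le_of_dvd hpos hdvd) (not_le.mpr hlt)

end Abstract

section Concrete

variable (p : ℕ) [Fact p.Prime]

lemma zpInfty_div (x : ZpInfty p) : ∃ y : ZpInfty p, p • y = x := by
  obtain ⟨q, rfl⟩ := QuotientAddGroup.mk'_surjective (padicIntAddSubgroup p) x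
  refine ⟨QuotientAddGroup.mk' _ (q / (p : ℚ_[p])), ?_⟩
  rw [← map_nsmul]
  congr 1
  rw [nsmul_eq_mul]
  have hp0 : (p : ℚ_[p]) ≠ 0 := by
    exact_mod_cast (Fact.out : p.Prime).ne_zero
  field_simp

lemma zpInfty_tor (x : ZpInfty p) : ∃ n : ℕ, p ^ n • x = 0 := by
  obtain ⟨q, rfl⟩ := QuotientAddGroup.mk'_surjective (padicIntAddSubgroup p) x
  have hp1 : (1 : ℝ) < (p : ℝ) := by
    exact_mod_cast (Fact.out : p.Prime).one_lt
  obtain ⟨n, hn⟩ := pow_unbounded_of_one_lt (‖q‖) hp1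
  refine ⟨n, ?_⟩
  rw [← map_nsmul, QuotientAddGroup.mk'_apply]
  rw [QuotientAddGroup.eq_zero_iff]
  have hnorm : ‖p ^ n • q‖ ≤ 1 := by
    rw [nsmul_eq_mul]
    push_cast
    rw [norm_mul, norm_pow, Padic.norm_p]
    have hppos : (0 : ℝ) < (p : ℝ) := by positivity
    rw [inv_pow]
    rw [inv_mul_le_one₀ (by positivity)]
    exact le_of_lt hn
  exact ⟨⟨p ^ n • q, hnorm⟩, rfl⟩

end Concrete

/-- Let `T` be the discrete `p`-torus of rank `r` and set `k = 1`
for odd `p`, `k = 2` for `p = 2`.  Any finite-order automorphism of `T` that is the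
identity on `Ω_k(T)` is the identity; i.e. finite groups of automorphisms act
faithfully on `Ω_k(T)`. -/
theorem addAut_discretePTorus_faithful_on_omega
    (p : ℕ) [Fact p.Prime] (r : ℕ)
    (α : AddAut (DiscretePTorus p r)) (hα : IsOfFinAddOrder α)
    (h : ∀ x : DiscretePTorus p r,
      p ^ (if p = 2 then 2 else 1) • x = 0 → α x = x) :
    α = 0 := by
  have hp : p.Prime := Fact.out
  refine finite_order_eq_one (k := if p = 2 then 2 else 1) hp ?_ ?_ ?_ ?_ α hα h
  · intro x
    have := fun i => zpInfty_div p (x i)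
    choose y hy using this
    exact ⟨y, funext fun i => hy i⟩
  · intro x
    have := fun i => zpInfty_tor p (x i)
    choose f hf using this
    refine ⟨Finset.univ.sup f, funext fun i => ?_⟩
    show p ^ Finset.univ.sup f • x i = 0
    have hle : f i ≤ Finset.univ.sup f := Finset.le_sup (Finset.mem_univ i)
    calc p ^ Finset.univ.sup f • x i
        = p ^ (Finset.univ.sup f - f i) • p ^ f i • x i := by
          rw [← mul_smul, ← pow_add, Nat.sub_add_cancel hle]
      _ = 0 := by rw [hf i, smul_zero]
  · split_ifs <;> omega
  · intro hp2; simp [hp2]
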